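/- In the category Dlubpo of directed-lub partial orders and continuous functions, if E fulfills axiom S5 for directed sets (if X ⊆ Y ⊆ |E| with X, Y directed, Y → y and Y ⊑ X, then X → y), then the general function dlubpo D ⇒* E also fulfills axiom S5. -/

import Mathlib

universe u

/-- A set is directed: non-empty and upward directed. -/
def Dir {α : Type u} [Preorder α] (A : Set α) : Prop :=
  A.Nonempty ∧ DirectedOn (· ≤ ·) A

/-- Continuity of a function between dlubpos: monotone and preserving natural lubs. -/
def IsCont {α β : Type u} [PartialOrder α] [PartialOrder β]
    (convD : Set α → α → Prop) (convE : Set β → β → Prop) (f : α → β) : Prop :=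
  Monotone f ∧ ∀ (A : Set α) (a : α), convD A a → convE (f '' A) (f a)

/-- The natural convergence of the general function dlubpo `D ⇒* E`:
`F → f` iff `F` is directed and for every directed `A ⊆ |D ⇒* E| × |D|`
(componentwise order) with `π₁[A] = F` and `π₂[A] → d`, one has
`eval[A] → f d` in `E`. -/
def ConvStar {α β : Type u} [PartialOrder α] [PartialOrder β]
    (convD : Set α → α → Prop) (convE : Set β → β → Prop)
    (F : Set {f : α → β // IsCont convD convE f})
    (f : {f : α → β // IsCont convD convE f}) : Prop :=
  Dir F ∧
  ∀ A : Set ({f : α → β // IsCont convD convE f} × α),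
    Dir A → Prod.fst '' A = F →
    ∀ d : α, convD (Prod.snd '' A) d →
      convE ((fun p => p.1.1 p.2) '' A) (f.1 d)

/-- If `E` fulfills axiom S5 for directed sets, then the general function dlubpo
`D ⇒* E` also fulfills axiom S5. -/
theorem stmt6 {α β : Type u} [PartialOrder α] [PartialOrder β]
    (convD : Set α → α → Prop) (convE : Set β → β → Prop)
    (hDdl : ∀ (A : Set α) (a : α), convD A a → Dir A ∧ IsLUB A a)
    (hDsing : ∀ a : α, convD {a} a)
    (hEdl : ∀ (A : Set β) (a : β), convE A a → Dir A ∧ IsLUB A a)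
    (hEsing : ∀ a : β, convE {a} a)
    (hS5E : ∀ (X Y : Set β) (y : β), X ⊆ Y → Dir X → Dir Y → convE Y y →
      (∀ b ∈ Y, ∃ a ∈ X, b ≤ a) → convE X y) :
    ∀ (F G : Set {f : α → β // IsCont convD convE f})
      (g : {f : α → β // IsCont convD convE f}),
      F ⊆ G → Dir F → Dir G → ConvStar convD convE G g →
      (∀ b ∈ G, ∃ a ∈ F, b ≤ a) → ConvStar convD convE F g := by
  intro F G g hFG hDF hDG hG hGF
  obtain ⟨hDirG, hConvG⟩ := hG
  refine ⟨hDF, ?_⟩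
  intro A hDirA hFst d hconvd
  obtain ⟨hAne, hAdir⟩ := hDirA
  set S : Set α := Prod.snd '' A with hS
  have hSne : S.Nonempty := hAne.image _
  have hGne : G.Nonempty := hDG.1
  have hSdir : DirectedOn (· ≤ ·) S := by
    rintro _ ⟨p, hp, rfl⟩ _ ⟨q, hq, rfl⟩
    obtain ⟨r, hr, hpr, hqr⟩ := hAdir p hp q hq
    exact ⟨r.2, ⟨r, hr, rfl⟩, hpr.2, hqr.2⟩
  set B : Set ({f : α → β // IsCont convD convE f} × α) := G ×ˢ S with hB
  have hAB : A ⊆ B := by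
    rintro ⟨f, x⟩ hx
    exact ⟨hFG (hFst ▸ ⟨_, hx, rfl⟩), ⟨_, hx, rfl⟩⟩
  have hDirB : Dir B := by
    constructor
    · exact hGne.prod hSne
    · rintro ⟨f1, x1⟩ ⟨hf1, hx1⟩ ⟨f2, x2⟩ ⟨hf2, hx2⟩
      obtain ⟨f3, hf3, h13, h23⟩ := hDG.2 f1 hf1 f2 hf2
      obtain ⟨x3, hx3, h13', h23'⟩ := hSdir x1 hx1 x2 hx2
      exact ⟨⟨f3, x3⟩, ⟨hf3, hx3⟩, ⟨h13, h13'⟩, ⟨h23, h23'⟩⟩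
  have hfstB : Prod.fst '' B = G := Set.fst_image_prod G hSne
  have hsndB : Prod.snd '' B = S := Set.snd_image_prod hGne S
  have hconvB : convE ((fun p => p.1.1 p.2) '' B) (g.1 d) := by
    apply hConvG B hDirB hfstB d
    rw [hsndB]; exact hconvd
  -- eval is monotone on pairs
  have hevalmono : ∀ p q : {f : α → β // IsCont convD convE f} × α,
      p ≤ q → p.1.1 p.2 ≤ q.1.1 q.2 := by
    intro p q hpq
    calc p.1.1 p.2 ≤ q.1.1 p.2 := hpq.1 p.2
      _ ≤ q.1.1 q.2 := q.1.2.1 hpq.2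
  have hDirImg : ∀ C : Set ({f : α → β // IsCont convD convE f} × α),
      Dir C → Dir ((fun p => p.1.1 p.2) '' C) := by
    rintro C ⟨hCne, hCdir⟩
    refine ⟨hCne.image _, ?_⟩
    rintro _ ⟨p, hp, rfl⟩ _ ⟨q, hq, rfl⟩
    obtain ⟨r, hr, hpr, hqr⟩ := hCdir p hp q hq
    exact ⟨r.1.1 r.2, ⟨r, hr, rfl⟩, hevalmono p r hpr, hevalmono q r hqr⟩
  apply hS5E _ _ _ (Set.image_mono hAB) (hDirImg A ⟨hAne, hAdir⟩)
    (hDirImg B hDirB) hconvB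
  rintro _ ⟨⟨h, x⟩, ⟨hh, hx⟩, rfl⟩
  obtain ⟨f1, hf1F, hhf1⟩ := hGF h hh
  have hf1A : f1 ∈ Prod.fst '' A := hFst ▸ hf1F
  obtain ⟨p, hp, hp1⟩ := hf1A
  obtain ⟨q, hq, hq2⟩ := hx
  obtain ⟨r, hr, hpr, hqr⟩ := hAdir p hp q hq
  refine ⟨r.1.1 r.2, ⟨r, hr, rfl⟩, ?_⟩
  calc h.1 x ≤ f1.1 x := hhf1 x
    _ = p.1.1 x := by rw [hp1]
    _ ≤ r.1.1 x := hpr.1 x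
    _ ≤ r.1.1 r.2 := r.1.2.1 (le_of_eq_of_le hq2.symm hqr.2)
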